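/- Define L_n^{(α)}(x,δ) by the recurrence (n+1)L_{n+1}^{(α)} + (x - (2n+α+1+n(2n+2α+1)δ)) L_n^{(α)} + (n+α)(1+(n-1)δ)(1+(n+α)δ) L_{n-1}^{(α)} = 0 with L_{-1}=0, L_0=1, and similarly L̃_n^{(α)}(x,δ) by (n+1)L̃_{n+1}^{(α)} + (x - (2n+α+1+(n(2n+2α+1)+(α+1)²/4)δ)) L̃_n^{(α)} + (n+α)(1+(n+(α-1)/2)δ)² L̃_{n-1}^{(α)} = 0 with L̃_{-1}=0, L̃_0=1. Then for all n ≥ 0, (n+1) L̃_{n+1}^{(-1)}(x,δ) = -x L̃_n^{(1)}(x,δ). -/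
import Mathlib


open Finset

/-- Deformed Laguerre polynomials `L_n^{(α)}(x,δ)` (C-type) defined by the recurrence
`(n+1) L_{n+1} + (x - (2n+α+1+n(2n+2α+1)δ)) L_n + (n+α)(1+(n-1)δ)(1+(n+α)δ) L_{n-1} = 0`,
`L_{-1} = 0`, `L_0 = 1`. -/
noncomputable def deformedLaguerre (α δ : ℝ) : ℕ → ℝ → ℝ
  | 0, _ => 1
  | 1, x => α + 1 - x
  | (n + 2), x =>
      (((2 * ((n : ℝ) + 1) + α + 1 + ((n : ℝ) + 1) * (2 * ((n : ℝ) + 1) + 2 * α + 1) * δ) - x)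
          * deformedLaguerre α δ (n + 1) x
        - ((n : ℝ) + 1 + α) * (1 + (n : ℝ) * δ) * (1 + ((n : ℝ) + 1 + α) * δ)
          * deformedLaguerre α δ n x) / ((n : ℝ) + 2)

/-- Deformed Laguerre polynomials `L̃_n^{(α)}(x,δ)` (B-type) defined by the recurrence
`(n+1) L̃_{n+1} + (x - (2n+α+1+(n(2n+2α+1)+(α+1)²/4)δ)) L̃_n
  + (n+α)(1+(n+(α-1)/2)δ)² L̃_{n-1} = 0`, `L̃_{-1} = 0`, `L̃_0 = 1`. -/
noncomputable def deformedLaguerreB (α δ : ℝ) : ℕ → ℝ → ℝ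
  | 0, _ => 1
  | 1, x => α + 1 + (α + 1) ^ 2 / 4 * δ - x
  | (n + 2), x =>
      (((2 * ((n : ℝ) + 1) + α + 1
            + (((n : ℝ) + 1) * (2 * ((n : ℝ) + 1) + 2 * α + 1) + (α + 1) ^ 2 / 4) * δ) - x)
          * deformedLaguerreB α δ (n + 1) x
        - ((n : ℝ) + 1 + α) * (1 + ((n : ℝ) + 1 + (α - 1) / 2) * δ) ^ 2
          * deformedLaguerreB α δ n x) / ((n : ℝ) + 2)

theorem deformedLaguerreB_identity (δ : ℝ) (hδ : 0 < δ) (n : ℕ) (x : ℝ) :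
    ((n : ℝ) + 1) * deformedLaguerreB (-1) δ (n + 1) x
      = -x * deformedLaguerreB 1 δ n x := by
  induction n using Nat.twoStepInduction with
  | zero =>
    have h := deformedLaguerreB.eq_2 (-1) δ x
    simp only [deformedLaguerreB, h]
    norm_num
  | one =>
    have h2 := deformedLaguerreB.eq_3 (-1) δ x 0
    have h1 := deformedLaguerreB.eq_2 (-1) δ x
    have g1 := deformedLaguerreB.eq_2 1 δ x
    show (↑(1:ℕ) + 1 : ℝ) * deformedLaguerreB (-1) δ (Nat.succ (Nat.succ 0)) x
        = -x * deformedLaguerreB 1 δ 1 x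
    rw [h2, g1, show (0:ℕ)+1 = 1 from rfl, h1]
    push_cast
    ring
  | more n ih1 ih2 =>
    have hn1 : ((n:ℝ)+1) ≠ 0 := by positivity
    have hn2 : ((n:ℝ)+2) ≠ 0 := by positivity
    push_cast at ih2
    have e1 : deformedLaguerreB (-1) δ (n + 1) x
        = -x * deformedLaguerreB 1 δ n x / ((n:ℝ) + 1) := by
      field_simp; linarith [ih1]
    have e2 : deformedLaguerreB (-1) δ (n + 1 + 1) x
        = -x * deformedLaguerreB 1 δ (n + 1) x / ((n:ℝ) + 2) := by
      field_simp; linarith [ih2]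
    have h3 := deformedLaguerreB.eq_3 (-1) δ x (n + 1)
    have h4 := deformedLaguerreB.eq_3 1 δ x n
    show (↑(n + 2 : ℕ) + 1 : ℝ) * deformedLaguerreB (-1) δ (Nat.succ (Nat.succ (n + 1))) x
        = -x * deformedLaguerreB 1 δ (Nat.succ (Nat.succ n)) x
    rw [h3, h4, e2, e1]
    push_cast
    field_simp
    ring
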